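/- Let (X,d) be a metric space, u a normal upper semicontinuous fuzzy set in X, and v a normal fuzzy set in X all of whose level sets [v]_α, α ∈ (0,1], are nonempty compact subsets of X. Then the function α ↦ H([u]_α, [v]_α) is Lebesgue measurable on [0,1]. -/

import Mathlib

open Set

namespace Stmt6Aux

open EMetric
open scoped ENNReal

noncomputable section

/-- The "left lower limit" of `f` along rational left endpoints. -/
def leftInf (f : ℝ → ℝ≥0∞) (x : ℝ) : ℝ≥0∞ :=
  ⨆ q : ℚ, if (q : ℝ) < x then ⨅ y ∈ Set.Ioo (q : ℝ) x, f y else 0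

lemma measurable_leftInf (f : ℝ → ℝ≥0∞) : Measurable (leftInf f) := by
  apply Measurable.iSup
  intro q
  refine Measurable.ite (measurableSet_Ioi (a := (q : ℝ))) ?_ measurable_const
  exact Antitone.measurable fun a b hab =>
    le_iInf₂ fun y hy => iInf₂_le y ⟨hy.1, hy.2.trans_le hab⟩

lemma le_leftInf_of (f : ℝ → ℝ≥0∞) (x : ℝ)
    (h : ∀ ε : ℝ≥0∞, 0 < ε → ∃ b, b < x ∧ ∀ y, b < y → y < x → f x ≤ f y + ε) :
    f x ≤ leftInf f x := by
  refine ENNReal.le_of_forall_pos_le_add fun ε hε _ => ?_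
  obtain ⟨b, hbx, hb⟩ := h ε (by exact_mod_cast hε)
  obtain ⟨q, hq1, hq2⟩ := exists_rat_btwn hbx
  have key : f x ≤ (⨅ y ∈ Set.Ioo (q : ℝ) x, f y) + ε := by
    have h2 : f x ≤ ⨅ y ∈ Set.Ioo (q : ℝ) x, (f y + ε) :=
      le_iInf₂ fun y hy => hb y (hq1.trans hy.1) hy.2
    refine h2.trans ?_
    rw [iInf_subtype', iInf_subtype', ← ENNReal.iInf_add]
  refine key.trans (add_le_add_left ?_ _)
  refine le_trans ?_ (le_iSup _ q)
  rw [if_pos hq2]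

lemma measurable_of_le_leftInf (f : ℝ → ℝ≥0∞) (hf : ∀ x, f x ≤ leftInf f x) :
    Measurable f := by
  apply measurable_of_Iio
  intro c
  have hN : {x | f x < c ∧ c ≤ leftInf f x}.Countable := by
    have hsub : {x | f x < c ∧ c ≤ leftInf f x} ⊆
        ⋃ (r : ℚ) (q : ℚ), {x : ℝ | f x < ((r : ℝ).toNNReal : ℝ≥0∞) ∧ (q : ℝ) < x ∧
          ∀ y ∈ Ioo (q : ℝ) x, ((r : ℝ).toNNReal : ℝ≥0∞) < f y} := by
      rintro x ⟨hx1, hx2⟩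
      obtain ⟨r, -, hr1, hr2⟩ := ENNReal.lt_iff_exists_rat_btwn.mp (lt_of_lt_of_le hx1 hx2)
      rw [leftInf, lt_iSup_iff] at hr2
      obtain ⟨q, hq⟩ := hr2
      by_cases h : (q : ℝ) < x
      · rw [if_pos h] at hq
        refine mem_iUnion.mpr ⟨r, mem_iUnion.mpr ⟨q, hr1, h, fun y hy => ?_⟩⟩
        exact lt_of_lt_of_le hq (iInf₂_le y hy)
      · rw [if_neg h] at hq
        exact absurd hq (by simp)
    refine Set.Countable.mono hsub (Set.countable_iUnion fun r =>
      Set.countable_iUnion fun q => Set.Subsingleton.countable ?_)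
    rintro a ⟨ha1, ha2, ha3⟩ b ⟨hb1, hb2, hb3⟩
    by_contra hne
    rcases lt_or_gt_of_ne hne with h | h
    · exact absurd (hb3 a ⟨ha2, h⟩) (not_lt.mpr ha1.le)
    · exact absurd (ha3 b ⟨hb2, h⟩) (not_lt.mpr hb1.le)
  have hset : f ⁻¹' Iio c = {x | leftInf f x < c} ∪ {x | f x < c ∧ c ≤ leftInf f x} := by
    ext x
    simp only [mem_preimage, mem_Iio, mem_union, mem_setOf_eq]
    constructor
    · intro h
      rcases lt_or_ge (leftInf f x) c with h' | h'
      · exact Or.inl h'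
      · exact Or.inr ⟨h, h'⟩
    · rintro (h | h)
      · exact lt_of_le_of_lt (hf x) h
      · exact h.1
  rw [hset]
  exact MeasurableSet.union (measurable_leftInf f measurableSet_Iio) hN.measurableSet

variable {X : Type*} [MetricSpace X]

lemma e2_identity (U V : Set X) (D : Set X) (hDV : V ⊆ closure D) :
    ⨆ y ∈ V, infEdist y U = ⨆ d ∈ D, (infEdist d U - infEdist d V) := by
  apply le_antisymm
  · refine iSup₂_le fun y hy => ?_
    refine ENNReal.le_of_forall_pos_le_add fun ε hε _ => ?_
    have hε2 : (0 : ℝ≥0∞) < ε / 2 := by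
      simp [ENNReal.div_pos_iff, (by exact_mod_cast hε.ne' : (ε : ℝ≥0∞) ≠ 0)]
    obtain ⟨d, hd, hdy⟩ := EMetric.mem_closure_iff.mp (hDV hy) _ hε2
    have h1 : infEdist y U ≤ infEdist d U + edist y d := infEdist_le_infEdist_add_edist
    have h2 : infEdist d U ≤ (infEdist d U - infEdist d V) + infEdist d V := le_tsub_add
    have h3 : infEdist d V ≤ edist d y := infEdist_le_edist_of_mem hy
    have h4 : infEdist d U - infEdist d V ≤ ⨆ d ∈ D, (infEdist d U - infEdist d V) :=
      le_iSup₂ (f := fun d (_ : d ∈ D) => infEdist d U - infEdist d V) d hd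
    calc infEdist y U ≤ ((infEdist d U - infEdist d V) + infEdist d V) + edist y d :=
          h1.trans (add_le_add_left h2 _)
      _ ≤ ((⨆ d ∈ D, (infEdist d U - infEdist d V)) + ε / 2) + ε / 2 := by
          refine add_le_add (add_le_add h4 (h3.trans ?_)) ?_
          · rw [edist_comm]; exact hdy.le
          · exact hdy.le
      _ = (⨆ d ∈ D, (infEdist d U - infEdist d V)) + ε := by
          rw [add_assoc, ENNReal.add_halves]
  · refine iSup₂_le fun d hd => ?_
    rw [tsub_le_iff_right]
    have h1 : ∀ y ∈ V, infEdist d U ≤ (⨆ z ∈ V, infEdist z U) + edist d y := fun y hy =>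
      infEdist_le_infEdist_add_edist.trans
        (add_le_add_left (le_iSup₂ (f := fun z (_ : z ∈ V) => infEdist z U) y hy) _)
    have h2 : infEdist d U ≤ ⨅ y ∈ V, ((⨆ z ∈ V, infEdist z U) + edist d y) := le_iInf₂ h1
    refine h2.trans ?_
    rw [infEdist, Metric.infEDist]
    rw [iInf_subtype', iInf_subtype', ← ENNReal.add_iInf]

lemma haus_left_cont (v : X → ℝ)
    (hv : ∀ α ∈ Set.Ioc (0 : ℝ) 1, {x | α ≤ v x}.Nonempty ∧ IsCompact {x | α ≤ v x})
    (t : ℝ) (ht : t ∈ Set.Ioc (0 : ℝ) 1) (ε : ℝ≥0∞) (hε : 0 < ε) :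
    ∃ b, 0 < b ∧ b < t ∧ ∀ β, b < β → β < t →
      hausdorffEdist {x | β ≤ v x} {x | t ≤ v x} ≤ ε := by
  by_contra hcon
  push_neg at hcon
  set b : ℕ → ℝ := fun n => t - t / (n + 2) with hbdef
  have ht0 : (0 : ℝ) < t := ht.1
  have hcast : ∀ n : ℕ, (0:ℝ) ≤ (n:ℝ) := fun n => Nat.cast_nonneg n
  have hb0 : ∀ n, 0 < b n := by
    intro n
    have h1 : t / (n + 2) < t := div_lt_self ht0 (by have := hcast n; linarith)
    simpa [hbdef] using sub_pos.mpr h1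
  have hblt : ∀ n, b n < t := by
    intro n
    have h1 : (0:ℝ) < t / (n + 2) := div_pos ht0 (by have := hcast n; linarith)
    simp only [hbdef]
    linarith
  have hbhalf : ∀ n, t / 2 ≤ b n := by
    intro n
    have h2 : t / (n+2) ≤ t / 2 := by
      apply div_le_div_of_nonneg_left ht0.le (by norm_num)
      have := hcast n; linarith
    simp only [hbdef]; linarith
  have hbmono : Monotone b := by
    intro m n hmn
    simp only [hbdef]
    have h2 : t / (n + 2) ≤ t / (m + 2) := by
      apply div_le_div_of_nonneg_left ht0.le
      · have := hcast m; linarith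
      · have h3 : (m:ℝ) ≤ (n:ℝ) := Nat.cast_le.mpr hmn
        linarith
    linarith
  have hbtend : Filter.Tendsto b Filter.atTop (nhds t) := by
    have h1 : Filter.Tendsto (fun n : ℕ => t / (n + 2)) Filter.atTop (nhds 0) := by
      apply Filter.Tendsto.div_atTop (tendsto_const_nhds)
      apply Filter.tendsto_atTop_add_const_right
      exact tendsto_natCast_atTop_atTop
    simpa [hbdef] using (tendsto_const_nhds (x := t)).sub h1
  choose β hβ1 hβ2 hβ3 using fun n => hcon (b n) (hb0 n) (hblt n)
  have hyex : ∀ n, ∃ y, β n ≤ v y ∧ ε < infEdist y {x | t ≤ v x} := by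
    intro n
    have h := hβ3 n
    rw [EMetric.hausdorffEdist, hausdorffEdist_def] at h
    have hsub : {x | t ≤ v x} ⊆ {x | β n ≤ v x} := fun z hz => le_trans (hβ2 n).le hz
    have hz : (⨆ z ∈ {x | t ≤ v x}, infEdist z {x | β n ≤ v x}) = 0 := by
      refine le_antisymm (iSup₂_le fun z hz => ?_) zero_le
      simp [EMetric.infEdist, infEdist_zero_of_mem (hsub hz)]
    erw [hz] at h
    have h' : ε < ⨆ y ∈ {x | β n ≤ v x}, infEdist y {x | t ≤ v x} := by
      simpa [EMetric.infEdist] using h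
    simp only [lt_iSup_iff] at h'
    obtain ⟨y, hy, hlt⟩ := h'
    exact ⟨y, hy, hlt⟩
  choose y hy1 hy2 using hyex
  have hhalfIoc : t / 2 ∈ Set.Ioc (0:ℝ) 1 := ⟨by linarith, by linarith [ht.2]⟩
  have hK : IsCompact {x | t/2 ≤ v x} := (hv _ hhalfIoc).2
  have hymem : ∀ n, y n ∈ {x | t/2 ≤ v x} := by
    intro n
    have h1 : t/2 ≤ β n := le_trans (hbhalf n) (hβ1 n).le
    exact le_trans h1 (hy1 n)
  obtain ⟨a, ha, φ, hφ, hφtend⟩ := hK.tendsto_subseq hymem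
  have hat : t ≤ v a := by
    have hmem : ∀ n, a ∈ {x | b n ≤ v x} := by
      intro n
      have hcl : IsClosed {x | b n ≤ v x} := by
        have h1 : b n ∈ Set.Ioc (0:ℝ) 1 := ⟨hb0 n, (hblt n).le.trans ht.2⟩
        exact (hv _ h1).2.isClosed
      refine hcl.mem_of_tendsto hφtend ?_
      refine Filter.eventually_atTop.mpr ⟨n, fun m hm => ?_⟩
      have h1 : b n ≤ b (φ m) := hbmono (hm.trans (hφ.le_apply))
      exact le_trans (h1.trans (hβ1 (φ m)).le) (hy1 (φ m))
    exact le_of_tendsto hbtend (Filter.Eventually.of_forall hmem)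
  obtain ⟨N, hN⟩ := (EMetric.tendsto_atTop.mp hφtend) ε hε
  have h1 : infEdist (y (φ N)) {x | t ≤ v x} ≤ edist (y (φ N)) a :=
    infEdist_le_edist_of_mem hat
  exact absurd (lt_of_lt_of_le (hy2 (φ N)) h1) (not_lt.mpr (hN N le_rfl).le)

end

end Stmt6Aux

open EMetric Stmt6Aux
open scoped ENNReal

/-- Let `u` be a normal upper semicontinuous fuzzy set in a metric space `X` and let `v`
be a normal fuzzy set all of whose level sets (for `α ∈ (0,1]`) are nonempty compact.
Then `α ↦ H([u]_α, [v]_α)` is measurable on `[0,1]`. -/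
theorem stmt_6 {X : Type*} [MetricSpace X] (u v : X → ℝ)
    (hu01 : ∀ x, u x ∈ Set.Icc (0 : ℝ) 1) (hv01 : ∀ x, v x ∈ Set.Icc (0 : ℝ) 1)
    (hu : ∀ α ∈ Set.Ioc (0 : ℝ) 1, {x | α ≤ u x}.Nonempty ∧ IsClosed {x | α ≤ u x})
    (hv : ∀ α ∈ Set.Ioc (0 : ℝ) 1, {x | α ≤ v x}.Nonempty ∧ IsCompact {x | α ≤ v x}) :
    Measurable (fun α : Set.Icc (0 : ℝ) 1 =>
      EMetric.hausdorffEdist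
        (if (α : ℝ) ≤ 0 then closure {x | 0 < u x} else {x | (α : ℝ) ≤ u x})
        (if (α : ℝ) ≤ 0 then closure {x | 0 < v x} else {x | (α : ℝ) ≤ v x})) := by
  classical
  -- a separable set containing all positive level sets of `v`
  have hsep : TopologicalSpace.IsSeparable (⋃ n : ℕ, {x | (1:ℝ) / (n + 1) ≤ v x}) := by
    apply TopologicalSpace.IsSeparable.iUnion
    intro n
    have hmem : (1 : ℝ) / (n + 1) ∈ Set.Ioc (0:ℝ) 1 := by
      constructor
      · positivity
      · rw [div_le_one (by positivity)]
        have : (0:ℝ) ≤ (n:ℝ) := Nat.cast_nonneg n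
        linarith
    exact ((hv _ hmem).2).isSeparable
  obtain ⟨D, hDc, hDd⟩ := hsep
  have hVD : ∀ t ∈ Set.Ioc (0:ℝ) 1, {x | t ≤ v x} ⊆ closure D := by
    intro t ht
    obtain ⟨n, hn⟩ := exists_nat_one_div_lt ht.1
    refine subset_trans ?_ (subset_trans
      (subset_iUnion (fun n : ℕ => {x | (1:ℝ) / (n + 1) ≤ v x}) n) hDd)
    intro x hx
    exact le_trans hn.le hx
  -- the two halves of the Hausdorff distance, as functions of the level
  set E1 : ℝ → ℝ≥0∞ :=
    fun t => ⨆ a ∈ {x | t ≤ u x}, infEdist a {x | t ≤ v x} with hE1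
  set E2 : ℝ → ℝ≥0∞ :=
    fun t => ⨆ d ∈ D, (infEdist d {x | t ≤ u x} - infEdist d {x | t ≤ v x}) with hE2
  have hmonoU : ∀ d : X, Monotone fun t : ℝ => infEdist d {x | t ≤ u x} :=
    fun d t1 t2 h12 => infEdist_anti (fun x hx => le_trans h12 hx)
  have hmonoV : ∀ d : X, Monotone fun t : ℝ => infEdist d {x | t ≤ v x} :=
    fun d t1 t2 h12 => infEdist_anti (fun x hx => le_trans h12 hx)
  have hE2m : Measurable E2 := by
    have hcnt : Countable D := hDc.to_subtype
    have hE2' : E2 = fun t => ⨆ d : D, (infEdist (d : X) {x | t ≤ u x}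
        - infEdist (d : X) {x | t ≤ v x}) := by
      funext t
      exact iSup_subtype'
    rw [hE2']
    exact Measurable.iSup fun d => ((hmonoU d).measurable).sub ((hmonoV d).measurable)
  have hE1m : Measurable ((Set.Ioc (0:ℝ) 1).indicator E1) := by
    apply measurable_of_le_leftInf
    intro t
    by_cases htm : t ∈ Set.Ioc (0:ℝ) 1
    · apply le_leftInf_of
      intro ε hε
      obtain ⟨b, hb0, hbt, hb⟩ := haus_left_cont v hv t htm ε hε
      refine ⟨b, hbt, fun y hby hyt => ?_⟩
      have hyIoc : y ∈ Set.Ioc (0:ℝ) 1 := ⟨hb0.trans hby, hyt.le.trans htm.2⟩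
      rw [indicator_of_mem hyIoc, indicator_of_mem htm]
      have key : E1 t ≤ E1 y + hausdorffEdist {x | y ≤ v x} {x | t ≤ v x} := by
        refine iSup₂_le fun a ha => ?_
        have haU : a ∈ {x | y ≤ u x} := le_trans hyt.le ha
        exact (infEdist_le_infEdist_add_hausdorffEdist).trans
          (add_le_add_left
            (le_iSup₂ (f := fun a (_ : a ∈ {x | y ≤ u x}) => infEdist a {x | y ≤ v x}) a haU) _)
      exact key.trans (add_le_add_right (hb y hby hyt) _)
    · rw [indicator_of_notMem htm]
      exact zero_le
  set C : ℝ≥0∞ :=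
    EMetric.hausdorffEdist (closure {x | 0 < u x}) (closure {x | 0 < v x}) with hC
  set G : ℝ → ℝ≥0∞ := fun t => if t ≤ 0 then C
    else ((Set.Ioc (0:ℝ) 1).indicator E1 t ⊔ (Set.Ioc (0:ℝ) 1).indicator E2 t) with hG
  have hGm : Measurable G := by
    refine Measurable.ite measurableSet_Iic measurable_const ?_
    exact hE1m.sup (hE2m.indicator measurableSet_Ioc)
  have heq : (fun α : Set.Icc (0 : ℝ) 1 =>
      EMetric.hausdorffEdist
        (if (α : ℝ) ≤ 0 then closure {x | 0 < u x} else {x | (α : ℝ) ≤ u x})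
        (if (α : ℝ) ≤ 0 then closure {x | 0 < v x} else {x | (α : ℝ) ≤ v x}))
      = G ∘ (fun α : Set.Icc (0 : ℝ) 1 => (α : ℝ)) := by
    funext α
    by_cases hα : (α : ℝ) ≤ 0
    · simp only [Function.comp_apply, hG, if_pos hα, hC]
    · have hIoc : (α : ℝ) ∈ Set.Ioc (0:ℝ) 1 := ⟨lt_of_not_ge hα, α.2.2⟩
      simp only [Function.comp_apply, hG, if_neg hα]
      rw [indicator_of_mem hIoc, indicator_of_mem hIoc, EMetric.hausdorffEdist, hausdorffEdist_def]
      erw [e2_identity {x | (α:ℝ) ≤ u x} {x | (α:ℝ) ≤ v x} D (hVD _ hIoc)]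
      rfl
  rw [heq]
  exact hGm.comp measurable_subtype_coe
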